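/- Let p ∈ [0,1], t ∈ [0,1], and let X_1, …, X_n be i.i.d. random variables with the geometric distribution on {0,1,2,…} with success probability 1/(1+p), i.e., Pr[X = k] = (p/(1+p))^k · (1/(1+p)) for each integer k ≥ 0 (so E[X_i] = p). Then Pr[ |(1/n) Σ_{i=1}^n (X_i − p)| ≥ t ] ≤ 2·exp(−n t² / 8). -/

import Mathlib

open MeasureTheory ProbabilityTheory

lemma expand_bound3 {x : ℝ} (hx : |x| ≤ 1) :
    |Real.exp x - (1 + x + x^2/2)| ≤ |x|^3 * (2/9) := by
  have h := Real.exp_bound hx (n := 3) (by norm_num)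
  simp [Finset.sum_range_succ, Nat.factorial] at h
  convert h using 2 <;> ring

private lemma prod_fact {p s : ℝ} (hp0 : 0 ≤ p) (hp1 : p ≤ 1) (hs0 : 0 ≤ s) (hs1 : s ≤ 1/4) :
    ∀ i j : ℕ, p^i * s^(j+2) ≤ (1/4:ℝ)^j * s^2 := by
  intro i j
  have h1 : p^i * s^j ≤ (1/4:ℝ)^j := by
    calc p^i * s^j ≤ 1 * (1/4:ℝ)^j :=
      mul_le_mul (pow_le_one₀ hp0 hp1) (pow_le_pow_left₀ hs0 hs1 j) (pow_nonneg hs0 j) zero_le_one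
    _ = (1/4:ℝ)^j := one_mul _
  calc p^i * s^(j+2) = (p^i * s^j) * s^2 := by ring
  _ ≤ (1/4:ℝ)^j * s^2 := mul_le_mul_of_nonneg_right h1 (sq_nonneg s)

lemma geomA {p s : ℝ} (hp0 : 0 ≤ p) (hp1 : p ≤ 1) (hs0 : 0 ≤ s) (hs1 : s ≤ 1/4) :
    1 ≤ (1 - p*(Real.exp s - 1)) * Real.exp (s*p + 2*s^2) := by
  have c := prod_fact hp0 hp1 hs0 hs1
  have hxs : |s| ≤ 1 := by rw [abs_of_nonneg hs0]; linarith
  have hu0 := (abs_le.mp (expand_bound3 hxs)).2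
  rw [abs_of_nonneg hs0] at hu0
  have hu : Real.exp s - 1 ≤ s + (5/9)*s^2 := by nlinarith [sq_nonneg s, mul_nonneg hs0 (sq_nonneg s)]
  set y : ℝ := s*p + 2*s^2 with hy
  have hy0 : 0 ≤ y := by positivity
  have hy38 : y ≤ 3/8 := by nlinarith [mul_nonneg hs0 hp0]
  have hyabs : |y| ≤ 1 := by rw [abs_of_nonneg hy0]; linarith
  have hE0 := (abs_le.mp (expand_bound3 hyabs)).1
  rw [abs_of_nonneg hy0] at hE0
  have hE : 1 + y + (5/12)*y^2 ≤ Real.exp y := by nlinarith [sq_nonneg y, mul_nonneg hy0 (sq_nonneg y)]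
  have key : 1 ≤ (1 - p*(s + (5/9)*s^2)) * (1 + y + (5/12)*y^2) := by
    rw [hy]
    nlinarith [c 1 0, c 1 1, c 1 2, c 1 3, c 1 4, c 2 0, c 2 1, c 2 2, c 2 3, c 3 1, c 3 2, sq_nonneg s]
  have hpos : (0:ℝ) ≤ 1 - p*(s + (5/9)*s^2) := by
    nlinarith [c 1 0, c 1 1]
  have h1 : 1 - p*(s + (5/9)*s^2) ≤ 1 - p*(Real.exp s - 1) := by
    nlinarith [mul_le_mul_of_nonneg_left hu hp0]
  have hE0' : (0:ℝ) ≤ 1 + y + (5/12)*y^2 := by positivity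
  calc (1:ℝ) ≤ (1 - p*(s + (5/9)*s^2)) * (1 + y + (5/12)*y^2) := key
  _ ≤ (1 - p*(Real.exp s - 1)) * (1 + y + (5/12)*y^2) :=
      mul_le_mul_of_nonneg_right h1 hE0'
  _ ≤ (1 - p*(Real.exp s - 1)) * Real.exp y := by
      have hfacpos : (0:ℝ) ≤ 1 - p*(Real.exp s - 1) := le_trans hpos h1
      exact mul_le_mul_of_nonneg_left hE hfacpos

lemma geomB {p s : ℝ} (hp0 : 0 ≤ p) (hp1 : p ≤ 1) (hs0 : 0 ≤ s) (hs1 : s ≤ 1/4) :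
    1 ≤ (1 - p*(Real.exp (-s) - 1)) * Real.exp (-(s*p) + 2*s^2) := by
  have c := prod_fact hp0 hp1 hs0 hs1
  have hxs : |(-s)| ≤ 1 := by rw [abs_neg, abs_of_nonneg hs0]; linarith
  have hv0 := (abs_le.mp (expand_bound3 hxs)).2
  rw [abs_neg, abs_of_nonneg hs0] at hv0
  have hv : Real.exp (-s) ≤ 1 - s + (5/9)*s^2 := by
    nlinarith [sq_nonneg s, mul_nonneg hs0 (sq_nonneg s)]
  have h1 : 1 + p*(s - (5/9)*s^2) ≤ 1 - p*(Real.exp (-s) - 1) := by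
    nlinarith [mul_le_mul_of_nonneg_left hv hp0]
  have h2 : 1 + (-(s*p) + 2*s^2) ≤ Real.exp (-(s*p) + 2*s^2) := by
    linarith [Real.add_one_le_exp (-(s*p) + 2*s^2)]
  have key : 1 ≤ (1 + p*(s - (5/9)*s^2)) * (1 + (-(s*p) + 2*s^2)) := by
    nlinarith [c 1 0, c 1 1, c 1 2, c 2 0, c 2 1, c 3 1, sq_nonneg s, sq_nonneg (s*(1-p)), mul_nonneg hp0 hs0]
  have hpos1 : (0:ℝ) ≤ 1 + p*(s - (5/9)*s^2) := by
    nlinarith [mul_nonneg hp0 hs0, mul_nonneg hp0 (sq_nonneg s)]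
  have hpos2 : (0:ℝ) ≤ 1 + (-(s*p) + 2*s^2) := by
    nlinarith [mul_nonneg hs0 hp0, sq_nonneg s, mul_le_mul hs1 hp1 hp0 (by norm_num : (0:ℝ) ≤ 1/4)]
  calc (1:ℝ) ≤ (1 + p*(s - (5/9)*s^2)) * (1 + (-(s*p) + 2*s^2)) := key
  _ ≤ (1 - p*(Real.exp (-s) - 1)) * (1 + (-(s*p) + 2*s^2)) :=
      mul_le_mul_of_nonneg_right h1 hpos2
  _ ≤ (1 - p*(Real.exp (-s) - 1)) * Real.exp (-(s*p) + 2*s^2) := by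
      exact mul_le_mul_of_nonneg_left h2 (le_trans hpos1 h1)

lemma geom_mgf {Ω : Type*} [MeasurableSpace Ω] (μ : Measure Ω) [IsProbabilityMeasure μ]
    {p c : ℝ} (hp0 : 0 ≤ p) (hp1 : p ≤ 1) (hc : |c| ≤ 1/4)
    {X : Ω → ℕ} (hX : Measurable X)
    (hd : ∀ k, μ {ω | X ω = k} = ENNReal.ofReal ((p / (1 + p)) ^ k * (1 / (1 + p)))) :
    Integrable (fun ω => Real.exp (c * (X ω : ℝ))) μ ∧
      mgf (fun ω => (X ω : ℝ)) μ c = 1 / (1 - p * (Real.exp c - 1)) := by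
  have hp' : (0:ℝ) < 1 + p := by linarith
  set r : ℝ := p / (1 + p) with hr_def
  set q : ℝ := 1 / (1 + p) with hq_def
  have hr0 : 0 ≤ r := by positivity
  have hq0 : 0 < q := by positivity
  have hr2 : r ≤ 1/2 := by rw [hr_def, div_le_iff₀ hp']; linarith
  have hexp14 : Real.exp (1/4) ≤ 4/3 := by
    have hmul : Real.exp (1/4) * Real.exp (-(1/4)) = 1 := by
      rw [← Real.exp_add]; norm_num
    nlinarith [Real.add_one_le_exp (-(1/4):ℝ), Real.exp_pos (1/4:ℝ)]
  have hec : Real.exp c ≤ 4/3 :=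
    le_trans (Real.exp_le_exp.mpr ((le_abs_self c).trans hc)) hexp14
  have hre : r * Real.exp c < 1 := by
    nlinarith [Real.exp_pos c, mul_le_mul hr2 hec (Real.exp_pos c).le (by norm_num : (0:ℝ) ≤ 1/2)]
  have hre0 : 0 ≤ r * Real.exp c := mul_nonneg hr0 (Real.exp_pos c).le
  have hden : 0 < 1 - r * Real.exp c := by linarith
  have hmap : ∀ k : ℕ, (μ.map X) {k} = ENNReal.ofReal (r ^ k * q) := by
    intro k
    rw [Measure.map_apply hX (measurableSet_singleton k)]
    exact hd k
  have hsummand : ∀ k : ℕ, Real.exp (c * k) * (r ^ k * q) = (r * Real.exp c) ^ k * q := by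
    intro k
    rw [mul_pow, mul_comm c (k:ℝ), Real.exp_nat_mul]
    ring
  have hsum : Summable (fun k : ℕ => Real.exp (c * k) * (r ^ k * q)) := by
    apply Summable.congr ((summable_geometric_of_lt_one hre0 hre).mul_right q)
    intro k; rw [hsummand k]
  have htsum : (∑' k : ℕ, Real.exp (c * k) * (r ^ k * q)) = q / (1 - r * Real.exp c) := by
    rw [tsum_congr hsummand, tsum_mul_right, tsum_geometric_of_lt_one hre0 hre]
    rw [div_eq_mul_inv, mul_comm]
  have hL : ∫⁻ ω, ENNReal.ofReal (Real.exp (c * (X ω : ℝ))) ∂μ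
      = ENNReal.ofReal (q / (1 - r * Real.exp c)) := by
    rw [← lintegral_map (f := fun k : ℕ => ENNReal.ofReal (Real.exp (c * (k:ℝ))))
      measurable_from_top hX, lintegral_countable']
    simp_rw [hmap]
    calc (∑' k : ℕ, ENNReal.ofReal (Real.exp (c * (k:ℝ))) * ENNReal.ofReal (r ^ k * q))
        = ∑' k : ℕ, ENNReal.ofReal (Real.exp (c * (k:ℝ)) * (r ^ k * q)) := by
          refine tsum_congr fun k => ?_
          rw [← ENNReal.ofReal_mul (Real.exp_pos _).le]
      _ = ENNReal.ofReal (∑' k : ℕ, Real.exp (c * (k:ℝ)) * (r ^ k * q)) :=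
          (ENNReal.ofReal_tsum_of_nonneg (fun k => by positivity) hsum).symm
      _ = ENNReal.ofReal (q / (1 - r * Real.exp c)) := by rw [htsum]
  have hmeas' : AEStronglyMeasurable (fun ω => Real.exp (c * (X ω : ℝ))) μ :=
    ((measurable_from_top.comp hX : Measurable fun ω => (X ω : ℝ)).const_mul c).exp.aestronglyMeasurable
  have hint : Integrable (fun ω => Real.exp (c * (X ω : ℝ))) μ := by
    refine ⟨hmeas', ?_⟩
    rw [hasFiniteIntegral_iff_ofReal (ae_of_all _ fun ω => (Real.exp_pos _).le), hL]
    exact ENNReal.ofReal_lt_top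
  refine ⟨hint, ?_⟩
  have hden2 : (0:ℝ) < 1 - p * (Real.exp c - 1) := by
    nlinarith [mul_le_mul_of_nonneg_left hec hp0, Real.exp_pos c]
  have hq_eq : q / (1 - r * Real.exp c) = 1 / (1 - p * (Real.exp c - 1)) := by
    have h3 : (0:ℝ) < 1 + p - p * Real.exp c := by nlinarith [hden2]
    rw [hq_def, hr_def]
    rw [div_eq_div_iff (by rw [hr_def] at hden; exact hden.ne') hden2.ne']
    field_simp
    ring
  rw [mgf, integral_eq_lintegral_of_nonneg_ae (ae_of_all _ fun ω => (Real.exp_pos _).le) hmeas',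
    hL, ENNReal.toReal_ofReal (by positivity), hq_eq]

theorem stmt8 {Ω : Type*} [MeasurableSpace Ω] (μ : Measure Ω)
    [IsProbabilityMeasure μ] (n : ℕ) (hn : 1 ≤ n) (p t : ℝ)
    (hp : 0 ≤ p ∧ p ≤ 1) (ht : 0 ≤ t ∧ t ≤ 1)
    (X : Fin n → Ω → ℕ) (hmeas : ∀ i, Measurable (X i))
    (hindep : iIndepFun X μ)
    (hdist : ∀ i k, μ {ω | X i ω = k} =
      ENNReal.ofReal ((p / (1 + p)) ^ k * (1 / (1 + p)))) :
    μ {ω | t ≤ |(1 / (n : ℝ)) * ∑ i, ((X i ω : ℝ) - p)|} ≤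
      ENNReal.ofReal (2 * Real.exp (-(n : ℝ) * t ^ 2 / 8)) := by
  obtain ⟨hp0, hp1⟩ := hp
  obtain ⟨ht0, ht1⟩ := ht
  set s : ℝ := t/4 with hs_def
  have hs0 : 0 ≤ s := by positivity
  have hs1 : s ≤ 1/4 := by rw [hs_def]; linarith
  have hsabs : |s| ≤ 1/4 := abs_le.mpr ⟨by linarith, hs1⟩
  have hnsabs : |(-s)| ≤ 1/4 := by rwa [abs_neg]
  set Y : Fin n → Ω → ℝ := fun i ω => (X i ω : ℝ) with hY_def
  have hYm : ∀ i, Measurable (Y i) := fun i => measurable_from_top.comp (hmeas i)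
  have hYindep : iIndepFun Y μ :=
    hindep.comp (fun _ => ((↑) : ℕ → ℝ)) (fun _ => measurable_from_top)
  have hgm : ∀ (i : Fin n) (c : ℝ), |c| ≤ 1/4 →
      Integrable (fun ω => Real.exp (c * Y i ω)) μ ∧
        mgf (Y i) μ c = 1 / (1 - p * (Real.exp c - 1)) :=
    fun i c hc => geom_mgf μ hp0 hp1 hc (hmeas i) (hdist i)
  -- integrability of exp of the sum
  have hintS : ∀ (c : ℝ), |c| ≤ 1/4 →
      Integrable (fun ω => Real.exp (c * (∑ i, Y i) ω)) μ :=
    fun c hc => hYindep.integrable_exp_mul_sum hYm (fun i _ => (hgm i c hc).1)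
  have hmgfS : ∀ (c : ℝ), |c| ≤ 1/4 →
      mgf (∑ i, Y i) μ c = (1 / (1 - p * (Real.exp c - 1)))^n := by
    intro c hc
    rw [hYindep.mgf_sum hYm Finset.univ]
    simp only [fun i => (hgm i c hc).2, Finset.prod_const, Finset.card_univ, Fintype.card_fin]
  -- positivity of denominators
  have hdenA : (0:ℝ) < 1 - p * (Real.exp s - 1) := by
    by_contra h
    push_neg at h
    have hprod := geomA hp0 hp1 hs0 hs1
    nlinarith [Real.exp_pos (s*p + 2*s^2),
      mul_nonpos_of_nonpos_of_nonneg h (Real.exp_pos (s*p + 2*s^2)).le]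
  have hexpns : Real.exp (-s) ≤ 1 := by
    have := Real.exp_le_exp.mpr (neg_nonpos.mpr hs0)
    rwa [Real.exp_zero] at this
  have hdenB : (0:ℝ) < 1 - p * (Real.exp (-s) - 1) := by
    nlinarith [mul_nonpos_of_nonneg_of_nonpos hp0 (by linarith : Real.exp (-s) - 1 ≤ 0)]
  -- per-factor bounds
  have hfacA : 1 / (1 - p * (Real.exp s - 1)) ≤ Real.exp (s*p + 2*s^2) := by
    rw [div_le_iff₀ hdenA]
    nlinarith [geomA hp0 hp1 hs0 hs1]
  have hfacB : 1 / (1 - p * (Real.exp (-s) - 1)) ≤ Real.exp (-(s*p) + 2*s^2) := by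
    rw [div_le_iff₀ hdenB]
    nlinarith [geomB hp0 hp1 hs0 hs1]
  -- Chernoff upper tail
  have hA : (μ {ω | (n:ℝ)*p + (n:ℝ)*t ≤ (∑ i, Y i) ω}).toReal ≤
      Real.exp (-(n:ℝ) * t^2 / 8) := by
    refine (measure_ge_le_exp_mul_mgf ((n:ℝ)*p + (n:ℝ)*t) hs0 (hintS s hsabs)).trans ?_
    rw [hmgfS s hsabs]
    calc Real.exp (-s * ((n:ℝ)*p + (n:ℝ)*t)) * (1 / (1 - p * (Real.exp s - 1)))^n
        = (Real.exp (-s*(p+t)) * (1 / (1 - p * (Real.exp s - 1))))^n := by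
          rw [mul_pow, ← Real.exp_nat_mul]
          congr 1
          ring
      _ ≤ (Real.exp (-(t^2/8)))^n := by
          refine pow_le_pow_left₀ (by positivity) ?_ n
          calc Real.exp (-s*(p+t)) * (1 / (1 - p * (Real.exp s - 1)))
              ≤ Real.exp (-s*(p+t)) * Real.exp (s*p + 2*s^2) :=
                mul_le_mul_of_nonneg_left hfacA (Real.exp_pos _).le
            _ = Real.exp (-(t^2/8)) := by
                rw [← Real.exp_add]
                congr 1
                rw [hs_def]; ring
      _ = Real.exp (-(n:ℝ) * t^2 / 8) := by
          rw [← Real.exp_nat_mul]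
          congr 1
          ring
  -- Chernoff lower tail
  have hB : (μ {ω | (∑ i, Y i) ω ≤ (n:ℝ)*p - (n:ℝ)*t}).toReal ≤
      Real.exp (-(n:ℝ) * t^2 / 8) := by
    have hns : (-s) ≤ 0 := neg_nonpos.mpr hs0
    refine (measure_le_le_exp_mul_mgf ((n:ℝ)*p - (n:ℝ)*t) hns (hintS (-s) hnsabs)).trans ?_
    rw [hmgfS (-s) hnsabs]
    calc Real.exp (-(-s) * ((n:ℝ)*p - (n:ℝ)*t)) * (1 / (1 - p * (Real.exp (-s) - 1)))^n
        = (Real.exp (s*(p-t)) * (1 / (1 - p * (Real.exp (-s) - 1))))^n := by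
          rw [mul_pow, ← Real.exp_nat_mul]
          congr 1
          ring
      _ ≤ (Real.exp (-(t^2/8)))^n := by
          refine pow_le_pow_left₀ (by positivity) ?_ n
          calc Real.exp (s*(p-t)) * (1 / (1 - p * (Real.exp (-s) - 1)))
              ≤ Real.exp (s*(p-t)) * Real.exp (-(s*p) + 2*s^2) :=
                mul_le_mul_of_nonneg_left hfacB (Real.exp_pos _).le
            _ = Real.exp (-(t^2/8)) := by
                rw [← Real.exp_add]
                congr 1
                rw [hs_def]; ring
      _ = Real.exp (-(n:ℝ) * t^2 / 8) := by
          rw [← Real.exp_nat_mul]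
          congr 1
          ring
  -- event inclusion
  have hn0 : (0:ℝ) < n := by
    have : (1:ℝ) ≤ n := by exact_mod_cast hn
    linarith
  have hsub : {ω | t ≤ |(1 / (n : ℝ)) * ∑ i, ((X i ω : ℝ) - p)|} ⊆
      {ω | (n:ℝ)*p + (n:ℝ)*t ≤ (∑ i, Y i) ω} ∪
      {ω | (∑ i, Y i) ω ≤ (n:ℝ)*p - (n:ℝ)*t} := by
    intro ω hω
    simp only [Set.mem_setOf_eq, Set.mem_union] at hω ⊢
    have hsum_eq : ∑ i, ((X i ω : ℝ) - p) = (∑ i, Y i) ω - (n:ℝ)*p := by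
      rw [Finset.sum_sub_distrib, Finset.sum_apply]
      simp [Finset.card_univ, mul_comm]
      rfl
    rw [hsum_eq, abs_mul, abs_of_pos (by positivity : (0:ℝ) < 1/(n:ℝ))] at hω
    have h' : (n:ℝ)*t ≤ |(∑ i, Y i) ω - (n:ℝ)*p| := by
      have h2 := mul_le_mul_of_nonneg_left hω hn0.le
      rwa [show (n:ℝ)*(1/(n:ℝ) * |(∑ i, Y i) ω - (n:ℝ)*p|) = |(∑ i, Y i) ω - (n:ℝ)*p| by
        field_simp] at h2
    rcases le_abs.mp h' with h | h
    · left; linarith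
    · right; linarith
  -- conclude
  calc μ {ω | t ≤ |(1 / (n : ℝ)) * ∑ i, ((X i ω : ℝ) - p)|}
      ≤ μ ({ω | (n:ℝ)*p + (n:ℝ)*t ≤ (∑ i, Y i) ω} ∪
          {ω | (∑ i, Y i) ω ≤ (n:ℝ)*p - (n:ℝ)*t}) := measure_mono hsub
    _ ≤ μ {ω | (n:ℝ)*p + (n:ℝ)*t ≤ (∑ i, Y i) ω} +
        μ {ω | (∑ i, Y i) ω ≤ (n:ℝ)*p - (n:ℝ)*t} := measure_union_le _ _
    _ ≤ ENNReal.ofReal (Real.exp (-(n:ℝ) * t^2 / 8)) +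
        ENNReal.ofReal (Real.exp (-(n:ℝ) * t^2 / 8)) := by
        gcongr
        · exact (ENNReal.le_ofReal_iff_toReal_le (measure_ne_top _ _)
            (Real.exp_pos _).le).mpr hA
        · exact (ENNReal.le_ofReal_iff_toReal_le (measure_ne_top _ _)
            (Real.exp_pos _).le).mpr hB
    _ = ENNReal.ofReal (2 * Real.exp (-(n:ℝ) * t^2 / 8)) := by
        rw [← ENNReal.ofReal_add (Real.exp_pos _).le (Real.exp_pos _).le, two_mul]
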